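/- Let G be a finite simple graph and let v be a pendant vertex of G (i.e., deg_G(v) = 1). Then γst(G) − 1 ≤ γst(G/v), where G/v is the vertex contraction of v in G (which, since v is pendant, equals G − v). -/

import Mathlib

/-- The degree of a vertex `x` in a graph `G`. -/
noncomputable def sdeg {V : Type*} (G : SimpleGraph V) (x : V) : ℕ :=
  (G.neighborSet x).ncard

/-- `D` is a strong dominating set of `G`: every vertex `x ∉ D` has a neighbor
`y ∈ D` with `deg x ≤ deg y`. -/
def IsStrongDominating {V : Type*} (G : SimpleGraph V) (D : Set V) : Prop :=
  ∀ x ∉ D, ∃ y ∈ D, G.Adj x y ∧ sdeg G x ≤ sdeg G y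

/-- The strong domination number of `G`. -/
noncomputable def sdn {V : Type*} (G : SimpleGraph V) : ℕ :=
  sInf {n | ∃ D : Set V, IsStrongDominating G D ∧ D.ncard = n}

/-- Vertex deletion `G - v`: the induced subgraph on the complement of `{v}`. -/
def delVtx {V : Type*} (G : SimpleGraph V) (v : V) : SimpleGraph {x : V // x ≠ v} where
  Adj a b := G.Adj a.1 b.1
  symm := ⟨fun a b h => G.symm.symm _ _ h⟩
  loopless := ⟨fun a h => G.loopless.irrefl a.1 h⟩

/-- Vertex contraction `G / v`: delete `v` and put a clique on its open neighborhood. -/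
def contractVtx {V : Type*} (G : SimpleGraph V) (v : V) : SimpleGraph {x : V // x ≠ v} where
  Adj a b := a ≠ b ∧ (G.Adj a.1 b.1 ∨ (G.Adj v a.1 ∧ G.Adj v b.1))
  symm := by
    constructor
    rintro a b ⟨hab, h | ⟨ha, hb⟩⟩
    · exact ⟨hab.symm, Or.inl h.symm⟩
    · exact ⟨hab.symm, Or.inr ⟨hb, ha⟩⟩
  loopless := by constructor; rintro a ⟨h, -⟩; exact h rfl

/-- `G ⊙ v`: remove all edges between any pair of neighbors of `v`. -/
def odotVtx {V : Type*} (G : SimpleGraph V) (v : V) : SimpleGraph V where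
  Adj x y := G.Adj x y ∧ ¬(G.Adj v x ∧ G.Adj v y)
  symm := by
    constructor
    rintro x y ⟨h, hn⟩
    exact ⟨h.symm, fun hc => hn ⟨hc.2, hc.1⟩⟩
  loopless := by constructor; rintro x ⟨h, -⟩; exact G.loopless.irrefl x h

/-- Edge contraction `G / uv`: merge `v` into `u`. -/
def contractEdge {V : Type*} (G : SimpleGraph V) (u v : V) : SimpleGraph {x : V // x ≠ v} where
  Adj a b := a ≠ b ∧ (G.Adj a.1 b.1 ∨ (a.1 = u ∧ G.Adj v b.1) ∨ (b.1 = u ∧ G.Adj v a.1))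
  symm := by
    constructor
    rintro a b ⟨hab, h | h | h⟩
    · exact ⟨hab.symm, Or.inl h.symm⟩
    · exact ⟨hab.symm, Or.inr (Or.inr h)⟩
    · exact ⟨hab.symm, Or.inr (Or.inl h)⟩
  loopless := by constructor; rintro a ⟨h, -⟩; exact h rfl

/-- The star `K_{1,n}` with center `none` and leaves `some i`. -/
def starG (n : ℕ) : SimpleGraph (Option (Fin n)) where
  Adj a b := (a = none ∧ b ≠ none) ∨ (a ≠ none ∧ b = none)
  symm := by
    constructor
    rintro a b (⟨h1, h2⟩ | ⟨h1, h2⟩)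
    · exact Or.inr ⟨h2, h1⟩
    · exact Or.inl ⟨h2, h1⟩
  loopless := by
    constructor
    rintro a (⟨h1, h2⟩ | ⟨h1, h2⟩)
    exacts [h2 h1, h1 h2]

/-- The path graph `P_n` on vertices `0, …, n-1`, consecutive integers adjacent. -/
def pathG (n : ℕ) : SimpleGraph (Fin n) where
  Adj i j := i.1 + 1 = j.1 ∨ j.1 + 1 = i.1
  symm := ⟨fun i j h => Or.symm h⟩
  loopless := by constructor; rintro i (h | h) <;> omega


lemma adj_contract_pendant {V : Type*} (G : SimpleGraph V) {v u : V}
    (hN : G.neighborSet v = {u}) (a b : {x : V // x ≠ v}) :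
    (contractVtx G v).Adj a b ↔ G.Adj a.1 b.1 := by
  constructor
  · rintro ⟨hab, h | ⟨ha, hb⟩⟩
    · exact h
    · exfalso
      have ha' : a.1 = u := by have := hN ▸ (G.mem_neighborSet v a.1).2 ha; exact this
      have hb' : b.1 = u := by have := hN ▸ (G.mem_neighborSet v b.1).2 hb; exact this
      exact hab (Subtype.ext (ha'.trans hb'.symm))
  · intro h
    exact ⟨fun hab => G.ne_of_adj h (congrArg Subtype.val hab), Or.inl h⟩

lemma image_neighbor_contract {V : Type*} (G : SimpleGraph V) {v u : V}
    (hN : G.neighborSet v = {u}) (a : {x : V // x ≠ v}) :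
    Subtype.val '' ((contractVtx G v).neighborSet a) = G.neighborSet a.1 \ {v} := by
  ext b
  simp only [Set.mem_image, SimpleGraph.mem_neighborSet, Set.mem_diff, Set.mem_singleton_iff]
  constructor
  · rintro ⟨b', hb', rfl⟩
    exact ⟨(adj_contract_pendant G hN a b').1 hb', b'.2⟩
  · rintro ⟨hb, hbv⟩
    exact ⟨⟨b, hbv⟩, (adj_contract_pendant G hN a ⟨b, hbv⟩).2 hb, rfl⟩

lemma sdeg_contract_eq {V : Type*} (G : SimpleGraph V) {v u : V}
    (hN : G.neighborSet v = {u}) (a : {x : V // x ≠ v}) :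
    sdeg (contractVtx G v) a = (G.neighborSet a.1 \ {v}).ncard := by
  rw [sdeg, ← Set.ncard_image_of_injective _ Subtype.val_injective,
    image_neighbor_contract G hN a]

/-- if v is pendant, then γst(G) − 1 ≤ γst(G/v). -/
theorem sdn_sub_one_le_sdn_contractVtx_pendant {V : Type*} [Fintype V] (G : SimpleGraph V)
    (v : V) (hv : sdeg G v = 1) :
    (sdn G : ℤ) - 1 ≤ (sdn (contractVtx G v) : ℤ) := by
  classical
  obtain ⟨u, hN⟩ := Set.ncard_eq_one.mp hv
  have hvu : G.Adj v u := (G.mem_neighborSet v u).1 (hN ▸ rfl)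
  have huv : u ≠ v := fun h => G.loopless.irrefl v (h ▸ hvu)
  -- the set defining sdn of the contraction is nonempty
  have hne : {n | ∃ D : Set {x : V // x ≠ v}, IsStrongDominating (contractVtx G v) D ∧
      D.ncard = n}.Nonempty :=
    ⟨Set.univ.ncard, Set.univ, fun x hx => absurd (Set.mem_univ x) hx, rfl⟩
  obtain ⟨D', hD', hcard⟩ := Nat.sInf_mem hne
  -- build a strong dominating set of G
  set D : Set V := insert u (Subtype.val '' D') with hD
  have hdom : IsStrongDominating G D := by
    intro x hx
    by_cases hxv : x = v
    · refine ⟨u, Set.mem_insert u _, hxv ▸ hvu, ?_⟩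
      rw [hxv, hv]
      have : v ∈ G.neighborSet u := (G.mem_neighborSet u v).2 hvu.symm
      have h1 : 0 < (G.neighborSet u).ncard :=
        (Set.ncard_pos (Set.toFinite _)).2 ⟨v, this⟩
      exact h1
    · have hxu : x ≠ u := fun h => hx (h ▸ Set.mem_insert u _)
      have hx' : (⟨x, hxv⟩ : {x : V // x ≠ v}) ∉ D' := fun h =>
        hx (Set.mem_insert_of_mem _ ⟨⟨x, hxv⟩, h, rfl⟩)
      obtain ⟨y', hy'D, hadj, hdeg⟩ := hD' ⟨x, hxv⟩ hx'
      refine ⟨y'.1, Set.mem_insert_of_mem _ ⟨y', hy'D, rfl⟩,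
        (adj_contract_pendant G hN _ _).1 hadj, ?_⟩
      -- degree comparison
      have hxdeg : sdeg (contractVtx G v) ⟨x, hxv⟩ = sdeg G x := by
        rw [sdeg_contract_eq G hN, sdeg]
        congr 1
        rw [Set.diff_singleton_eq_self]
        intro hmem
        have : x ∈ G.neighborSet v := (G.mem_neighborSet v x).2
          ((G.mem_neighborSet x v).1 hmem).symm
        have : x ∈ ({u} : Set V) := hN ▸ this
        exact hxu this
      have hydeg : sdeg (contractVtx G v) y' ≤ sdeg G y'.1 := by
        rw [sdeg_contract_eq G hN, sdeg]
        exact Set.ncard_le_ncard Set.diff_subset (Set.toFinite _)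
      calc sdeg G x = sdeg (contractVtx G v) ⟨x, hxv⟩ := hxdeg.symm
        _ ≤ sdeg (contractVtx G v) y' := hdeg
        _ ≤ sdeg G y'.1 := hydeg
  have hle : sdn G ≤ D.ncard := Nat.sInf_le ⟨D, hdom, rfl⟩
  have hDcard : D.ncard ≤ D'.ncard + 1 := by
    calc D.ncard ≤ (Subtype.val '' D').ncard + 1 := Set.ncard_insert_le _ _
      _ = D'.ncard + 1 := by rw [Set.ncard_image_of_injective _ Subtype.val_injective]
  have hsdn : sdn (contractVtx G v) = D'.ncard := hcard.symm
  have : sdn G ≤ sdn (contractVtx G v) + 1 := by omega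
  omega
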